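/- Let g = gl_N(C) and define for an irreducible g-module V the set J_W(V) = {v ∈ V : (r u^T)^2 v = (u|r)(r u^T) v for all u ∈ C^N, r ∈ Z^N}. Then J_W(V) is a g-submodule of V. -/

import Mathlib

open Matrix

attribute [local instance 100] LieRing.ofAssociativeRing

set_option linter.unusedSectionVars false

section JWaux

variable {N : ℕ} {V : Type*} [AddCommGroup V] [Module ℂ V]
  [LieRingModule (Matrix (Fin N) (Fin N) ℂ) V]
  [LieModule ℂ (Matrix (Fin N) (Fin N) ℂ) V]

/-- The polarized condition. -/
def JWR (v : V) (A B : Matrix (Fin N) (Fin N) ℂ) (a b : ℂ) : Prop :=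
  ⁅A, ⁅B, v⁆⁆ + ⁅B, ⁅A, v⁆⁆ = a • ⁅B, v⁆ + b • ⁅A, v⁆

/-- The defining condition of `J_W(V)`. -/
def JWP (N : ℕ) {V : Type*} [AddCommGroup V] [Module ℂ V]
    [LieRingModule (Matrix (Fin N) (Fin N) ℂ) V] (v : V) : Prop :=
  ∀ (u : Fin N → ℂ) (r : Fin N → ℤ),
    ⁅(Matrix.vecMulVec (fun i => (r i : ℂ)) u : Matrix (Fin N) (Fin N) ℂ),
      ⁅(Matrix.vecMulVec (fun i => (r i : ℂ)) u : Matrix (Fin N) (Fin N) ℂ), v⁆⁆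
    = (u ⬝ᵥ fun i => (r i : ℂ)) •
        ⁅(Matrix.vecMulVec (fun i => (r i : ℂ)) u : Matrix (Fin N) (Fin N) ℂ), v⁆

lemma JWR.polar {v : V} {A B : Matrix (Fin N) (Fin N) ℂ} {a b : ℂ}
    (hA : ⁅A, ⁅A, v⁆⁆ = a • ⁅A, v⁆) (hB : ⁅B, ⁅B, v⁆⁆ = b • ⁅B, v⁆)
    (hAB : ⁅A + B, ⁅A + B, v⁆⁆ = (a + b) • ⁅A + B, v⁆) :
    JWR v A B a b := by
  unfold JWR
  have h := hAB
  simp only [add_lie, lie_add, add_smul, smul_add] at h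
  rw [hA, hB] at h
  linear_combination (norm := abel) h

lemma JWR.smul {v : V} {A B : Matrix (Fin N) (Fin N) ℂ} {a b : ℂ}
    (h : JWR v A B a b) (c : ℂ) : JWR v A (c • B) a (c * b) := by
  unfold JWR at h ⊢
  simp only [smul_lie, lie_smul]
  rw [← smul_add, h, smul_add, smul_comm c a, mul_smul, smul_comm c b]

lemma JWR.add {v : V} {A B B' : Matrix (Fin N) (Fin N) ℂ} {a b b' : ℂ}
    (h : JWR v A B a b) (h' : JWR v A B' a b') : JWR v A (B + B') a (b + b') := by
  unfold JWR at h h' ⊢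
  simp only [add_lie, lie_add, add_smul, smul_add]
  linear_combination (norm := abel) h + h'

lemma JWR.zero (v : V) (A : Matrix (Fin N) (Fin N) ℂ) (a : ℂ) :
    JWR v A (0 : Matrix (Fin N) (Fin N) ℂ) a 0 := by
  simp [JWR]

lemma JWR.sum {v : V} {A : Matrix (Fin N) (Fin N) ℂ} {a : ℂ} {ι : Type*} (s : Finset ι)
    (B : ι → Matrix (Fin N) (Fin N) ℂ) (b : ι → ℂ)
    (h : ∀ i ∈ s, JWR v A (B i) a (b i)) :
    JWR v A (∑ i ∈ s, B i) a (∑ i ∈ s, b i) := by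
  classical
  induction s using Finset.induction with
  | empty => simpa using JWR.zero v A a
  | insert i s' hx ih =>
    rw [Finset.sum_insert hx, Finset.sum_insert hx]
    exact (h i (Finset.mem_insert_self i s')).add (ih fun j hj => h j (Finset.mem_insert_of_mem hj))

lemma JWR.sub {v : V} {A B B' : Matrix (Fin N) (Fin N) ℂ} {a b b' : ℂ}
    (h : JWR v A B a b) (h' : JWR v A B' a b') : JWR v A (B - B') a (b - b') := by
  have := h.add ((h'.smul (-1)))
  simpa [sub_eq_add_neg] using this

lemma castZ_add (r r' : Fin N → ℤ) :
    (fun i => ((r + r') i : ℂ)) = (fun i => (r i : ℂ)) + fun i => (r' i : ℂ) := by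
  funext i
  simp only [Pi.add_apply]
  push_cast
  ring

lemma castZ_single (i : Fin N) :
    (fun j => ((Pi.single i (1 : ℤ) : Fin N → ℤ) j : ℂ)) = (Pi.single i (1 : ℂ)) := by
  funext j
  by_cases h : j = i <;> simp [Pi.single_apply, h]

lemma vecMulVec_add_right (r u w : Fin N → ℂ) :
    vecMulVec r (u + w) = vecMulVec r u + vecMulVec r w := by
  ext i j
  simp [vecMulVec_apply, mul_add]

lemma vecMulVec_add_left (r r' u : Fin N → ℂ) :
    vecMulVec (r + r') u = vecMulVec r u + vecMulVec r' u := by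
  ext i j
  simp [vecMulVec_apply, add_mul]

/-- polarization in `u` (same `r`). -/
lemma polar_u {v : V} (hv : JWP N v) (r : Fin N → ℤ) (u w : Fin N → ℂ) :
    JWR v (vecMulVec (fun i => (r i : ℂ)) u) (vecMulVec (fun i => (r i : ℂ)) w)
      (u ⬝ᵥ fun i => (r i : ℂ)) (w ⬝ᵥ fun i => (r i : ℂ)) := by
  apply JWR.polar (hv u r) (hv w r)
  have h := hv (u + w) r
  rwa [vecMulVec_add_right, add_dotProduct] at h

/-- polarization in `r` (same `u`). -/
lemma polar_r {v : V} (hv : JWP N v) (r r' : Fin N → ℤ) (u : Fin N → ℂ) :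
    JWR v (vecMulVec (fun i => (r i : ℂ)) u) (vecMulVec (fun i => (r' i : ℂ)) u)
      (u ⬝ᵥ fun i => (r i : ℂ)) (u ⬝ᵥ fun i => (r' i : ℂ)) := by
  apply JWR.polar (hv u r) (hv u r')
  have h := hv u (r + r')
  rwa [castZ_add, vecMulVec_add_left, dotProduct_add] at h

lemma vecMulVec_eq_sum (s u : Fin N → ℂ) :
    vecMulVec s u = ∑ i, s i • vecMulVec (Pi.single i (1 : ℂ)) u := by
  ext j k
  simp only [vecMulVec_apply, Matrix.sum_apply, Matrix.smul_apply, Pi.single_apply,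
    smul_eq_mul]
  rw [Finset.sum_eq_single j]
  · simp
  · intro i _ hij
    simp [Ne.symm hij]
  · simp

lemma bracket_vecMulVec (r u : Fin N → ℂ) (x : Matrix (Fin N) (Fin N) ℂ) :
    (⁅vecMulVec r u, x⁆ : Matrix (Fin N) (Fin N) ℂ)
      = vecMulVec r (u ᵥ* x) - vecMulVec (x *ᵥ r) u := by
  rw [Ring.lie_def]
  ext i j
  simp [vecMulVec_apply, Matrix.mul_apply, Matrix.vecMul, Matrix.mulVec, dotProduct,
    Finset.mul_sum, Finset.sum_mul, mul_assoc]

/-- The key step: `J_W` is stable under the `gl_N` action. -/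
lemma JWP.lie_mem {v : V} (x : Matrix (Fin N) (Fin N) ℂ) (hv : JWP N v) : JWP N ⁅x, v⁆ := by
  intro u r
  set rc : Fin N → ℂ := fun i => (r i : ℂ) with hrc
  set A : Matrix (Fin N) (Fin N) ℂ := vecMulVec rc u with hA
  set a : ℂ := u ⬝ᵥ rc with ha
  -- the polarized identity for B = ⁅A, x⁆ with second coefficient 0
  have hB : JWR v A ⁅A, x⁆ a 0 := by
    rw [hA, bracket_vecMulVec]
    have h1 : JWR v A (vecMulVec rc (u ᵥ* x)) a ((u ᵥ* x) ⬝ᵥ rc) := polar_u hv r u (u ᵥ* x)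
    have h2 : JWR v A (vecMulVec (x *ᵥ rc) u) a (u ⬝ᵥ (x *ᵥ rc)) := by
      have hsum : ∀ i : Fin N, JWR v A (vecMulVec (Pi.single i (1 : ℂ)) u) a
          (u ⬝ᵥ Pi.single i (1 : ℂ)) := by
        intro i
        have := polar_r hv r (Pi.single i (1 : ℤ)) u
        rwa [castZ_single] at this
      have h3 := JWR.sum (v := v) (A := A) (a := a) Finset.univ
        (fun i => (x *ᵥ rc) i • vecMulVec (Pi.single i (1 : ℂ)) u)
        (fun i => (x *ᵥ rc) i * (u ⬝ᵥ Pi.single i (1 : ℂ)))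
        (fun i _ => (hsum i).smul ((x *ᵥ rc) i))
      rwa [← vecMulVec_eq_sum, show (∑ i, (x *ᵥ rc) i * (u ⬝ᵥ Pi.single i (1 : ℂ)))
        = u ⬝ᵥ (x *ᵥ rc) by
          have hk : ∀ k : Fin N, u ⬝ᵥ Pi.single k (1 : ℂ) = u k := fun k => by simp
          simp only [hk]
          simp only [dotProduct]
          exact Finset.sum_congr rfl fun k _ => mul_comm _ _] at h3
    have h4 := h1.sub h2
    rwa [show (u ᵥ* x) ⬝ᵥ rc - u ⬝ᵥ (x *ᵥ rc) = 0 by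
      rw [← dotProduct_mulVec]; ring] at h4
  -- now the Leibniz computation
  unfold JWR at hB
  rw [zero_smul, add_zero] at hB
  have hv' := hv u r
  rw [← hrc, ← hA, ← ha] at hv'
  show ⁅A, ⁅A, ⁅x, v⁆⁆⁆ = a • ⁅A, ⁅x, v⁆⁆
  rw [leibniz_lie A x v, lie_add, leibniz_lie A x ⁅A, v⁆, hv', lie_smul, smul_add]
  linear_combination (norm := abel) hB

end JWaux

/-- Let `g = gl_N(ℂ)` and `V` an irreducible `g`-module. The set
`J_W(V) = {v : (r u^T)² v = (u|r)(r u^T) v for all u ∈ ℂ^N, r ∈ ℤ^N}` is a `g`-submodule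
of `V`. -/
theorem JW_is_submodule (N : ℕ) (V : Type*) [AddCommGroup V] [Module ℂ V]
    [LieRingModule (Matrix (Fin N) (Fin N) ℂ) V]
    [LieModule ℂ (Matrix (Fin N) (Fin N) ℂ) V]
    [LieModule.IsIrreducible ℂ (Matrix (Fin N) (Fin N) ℂ) V] :
    ∃ W : LieSubmodule ℂ (Matrix (Fin N) (Fin N) ℂ) V, (W : Set V) =
      {v : V | ∀ (u : Fin N → ℂ) (r : Fin N → ℤ),
        ⁅(Matrix.vecMulVec (fun i => (r i : ℂ)) u : Matrix (Fin N) (Fin N) ℂ),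
          ⁅(Matrix.vecMulVec (fun i => (r i : ℂ)) u : Matrix (Fin N) (Fin N) ℂ), v⁆⁆
        = (u ⬝ᵥ fun i => (r i : ℂ)) •
            ⁅(Matrix.vecMulVec (fun i => (r i : ℂ)) u : Matrix (Fin N) (Fin N) ℂ), v⁆} := by
  refine ⟨⟨⟨⟨⟨{v : V | JWP N v}, ?_⟩, ?_⟩, ?_⟩, ?_⟩, rfl⟩
  · intro v w hv hw
    intro u r
    simp only [lie_add]
    rw [hv u r, hw u r, smul_add]
  · intro u r
    simp only [lie_zero, smul_zero]
  · intro c v hv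
    intro u r
    simp only [lie_smul]
    rw [hv u r, smul_comm]
  · intro x v hv
    exact JWP.lie_mem x hv
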